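/- Let f be Lipschitz and x a periodic point with I(x) ≠ 0. Then there exists a cylinder k containing x such that inf{I(y) : y ∈ k periodic} = I(x). -/

import Mathlib

open MeasureTheory Filter Real Topology
open scoped ENNReal

noncomputable section

abbrev X (d : ℕ) : Type := ℕ → Fin d

def shift {d : ℕ} (x : X d) : X d := fun n => x (n + 1)

def birkhoff {d : ℕ} (f : X d → ℝ) (n : ℕ) (x : X d) : ℝ :=
  ∑ i ∈ Finset.range n, f (shift^[i] x)

def IsPeriodic {d : ℕ} (x : X d) : Prop := ∃ n, 0 < n ∧ shift^[n] x = x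

def minPer {d : ℕ} (x : X d) : ℕ := Function.minimalPeriod shift x

def beta {d : ℕ} (f : X d → ℝ) : ℝ :=
  sSup {r : ℝ | ∃ μ : Measure (X d), IsProbabilityMeasure μ ∧ μ.map shift = μ ∧ r = ∫ x, f x ∂μ}

def Ifun {d : ℕ} (f : X d → ℝ) (x : X d) : ℝ :=
  (minPer x : ℝ) * beta f - birkhoff f (minPer x) x

def dtheta {d : ℕ} (θ : ℝ) (x y : X d) : ℝ :=
  letI : Decidable (x = y) := Classical.dec _
  if h : x = y then 0 else θ ^ Nat.find (Function.ne_iff.mp h)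

def LipWrt {d : ℕ} (θ C : ℝ) (f : X d → ℝ) : Prop :=
  ∀ x y, |f x - f y| ≤ C * dtheta θ x y

def periodize {d : ℕ} (n : ℕ) (w : Fin (n + 1) → Fin d) : X d :=
  fun i => w ⟨i % (n + 1), Nat.mod_lt i (Nat.succ_pos n)⟩

def pressure {d : ℕ} (g : X d → ℝ) : ℝ :=
  Filter.limsup (fun n : ℕ =>
    Real.log (∑ w : Fin (n + 1) → Fin d, Real.exp (birkhoff g (n + 1) (periodize n w))) / ((n : ℝ) + 1))
    Filter.atTop

def zetaVal {d : ℕ} (f : X d → ℝ) (c s : ℝ) (k : X d → ℝ) : ℝ :=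
  ∑' n : ℕ, ∑ w : Fin (n + 1) → Fin d,
    Real.exp (c * s * birkhoff f (n + 1) (periodize n w) - ((n : ℝ) + 1) * pressure (fun y => c * f y))
      * (birkhoff k (n + 1) (periodize n w) / ((n : ℝ) + 1))

def etaVal {d : ℕ} (f : X d → ℝ) (c : ℝ) (N : ℕ) (k : X d → ℝ) : ℝ :=
  ∑ n ∈ Finset.range N, ∑ w : Fin (n + 1) → Fin d,
    Real.exp (c * birkhoff f (n + 1) (periodize n w)) * (birkhoff k (n + 1) (periodize n w) / ((n : ℝ) + 1))

def piVal {d : ℕ} (f : X d → ℝ) (c : ℝ) (N : ℕ) (k : X d → ℝ) : ℝ :=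
  ∑ n ∈ Finset.range N, ∑ w : Fin (n + 1) → Fin d,
    Real.exp (c * birkhoff f (n + 1) (periodize n w) - ((n : ℝ) + 1) * pressure (fun y => c * f y))
      * (birkhoff k (n + 1) (periodize n w) / ((n : ℝ) + 1))

def cylSet {d : ℕ} (m : ℕ) (w : Fin m → Fin d) : Set (X d) :=
  {x : X d | ∀ i : Fin m, x i = w i}

def Itilde {d : ℕ} (θ : ℝ) (f : X d → ℝ) (x : X d) : EReal :=
  ⨆ ε : {e : ℝ // 0 < e},
    sInf {r : EReal | ∃ y : X d, IsPeriodic y ∧ dtheta θ x y ≤ ε.1 ∧ r = ((Ifun f y : ℝ) : EReal)}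

def orbitMeasure {d : ℕ} (x : X d) : Measure (X d) :=
  ((minPer x : ℝ≥0∞))⁻¹ • ∑ i ∈ Finset.range (minPer x), Measure.dirac (shift^[i] x)

namespace Aux9

lemma shift_iter_apply {d : ℕ} (x : X d) (k j : ℕ) : (shift^[k] x) j = x (j + k) := by
  induction k generalizing x with
  | zero => simp
  | succ k ih =>
    rw [Function.iterate_succ_apply, ih]
    rfl

lemma periodic_of_forall {d : ℕ} {x : X d} {p : ℕ} (h : ∀ j, x (j + p) = x j) :
    shift^[p] x = x := by
  funext j; rw [shift_iter_apply, h]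

lemma forall_of_periodic {d : ℕ} {x : X d} {p : ℕ} (h : shift^[p] x = x) (j : ℕ) :
    x (j + p) = x j := by
  conv_rhs => rw [← h]
  rw [shift_iter_apply]

lemma iterate_mul_fix {d : ℕ} {z : X d} {p : ℕ} (h : shift^[p] z = z) (t : ℕ) :
    shift^[p * t] z = z := by
  induction t with
  | zero => simp
  | succ t ih => rw [Nat.mul_succ, Function.iterate_add_apply, h, ih]

lemma apply_mod {d : ℕ} {x : X d} {p : ℕ} (hp : 0 < p) (h : shift^[p] x = x) (j : ℕ) :
    x j = x (j % p) := by
  calc x j = x (j % p + p * (j / p)) := by rw [Nat.mod_add_div]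
    _ = (shift^[p * (j / p)] x) (j % p) := (shift_iter_apply _ _ _).symm
    _ = x (j % p) := by rw [iterate_mul_fix h]

lemma iterate_mod {d : ℕ} {z : X d} {p : ℕ} (h : shift^[p] z = z) (j : ℕ) :
    shift^[j] z = shift^[j % p] z := by
  conv_lhs => rw [← Nat.mod_add_div j p, Function.iterate_add_apply]
  rw [iterate_mul_fix h]

lemma birkhoff_add {d : ℕ} (f : X d → ℝ) (a b : ℕ) (z : X d) :
    birkhoff f (a + b) z = birkhoff f a z + birkhoff f b (shift^[a] z) := by
  unfold birkhoff
  rw [Finset.sum_range_add]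
  congr 1
  refine Finset.sum_congr rfl fun i _ => ?_
  rw [← Function.iterate_add_apply, Nat.add_comm i a]

lemma birkhoff_mul {d : ℕ} (f : X d → ℝ) {n : ℕ} {x : X d} (h : shift^[n] x = x) (q : ℕ) :
    birkhoff f (q * n) x = q * birkhoff f n x := by
  induction q with
  | zero => simp [birkhoff]
  | succ q ih =>
    have h2 : shift^[q * n] x = x := by
      have h3 := iterate_mul_fix (p := n) h q
      rwa [Nat.mul_comm] at h3
    rw [Nat.succ_mul, birkhoff_add, ih, h2]
    push_cast; ring

lemma dtheta_nonneg {d : ℕ} {θ : ℝ} (hθ0 : 0 < θ) (x y : X d) : 0 ≤ dtheta θ x y := by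
  unfold dtheta
  split
  · exact le_refl 0
  · positivity

lemma dtheta_le_pow {d : ℕ} {θ : ℝ} (hθ0 : 0 < θ) (hθ1 : θ < 1) {x y : X d} {k : ℕ}
    (h : ∀ j < k, x j = y j) : dtheta θ x y ≤ θ ^ k := by
  unfold dtheta
  split
  · positivity
  · rename_i hne
    apply pow_le_pow_of_le_one hθ0.le hθ1.le
    rw [Nat.le_find_iff]
    intro m hm
    simpa using h m hm

end Aux9


namespace Aux9

lemma shift_measurable {d : ℕ} : Measurable (shift (d := d)) :=
  measurable_pi_lambda _ (fun j => measurable_pi_apply (j + 1))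

lemma betaSet_bddAbove {d : ℕ} {f : X d → ℝ} {B : ℝ} (hB : ∀ z, |f z| ≤ B) :
    BddAbove {r : ℝ | ∃ μ : Measure (X d), IsProbabilityMeasure μ ∧ μ.map shift = μ ∧
      r = ∫ x, f x ∂μ} := by
  refine ⟨B, fun r hr => ?_⟩
  obtain ⟨μ, hμp, _, hr⟩ := hr
  subst hr
  have := MeasureTheory.norm_integral_le_of_norm_le_const (μ := μ) (f := f) (C := B)
    (Filter.Eventually.of_forall fun z => by simpa [Real.norm_eq_abs] using hB z)
  simp only [probReal_univ, mul_one] at this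
  exact (le_abs_self _).trans (by simpa [Real.norm_eq_abs] using this)

lemma birkhoff_le_beta {d : ℕ} {f : X d → ℝ} {B : ℝ} (hB : ∀ z, |f z| ≤ B)
    {z : X d} {p : ℕ} (hp : 0 < p) (hz : shift^[p] z = z) :
    birkhoff f p z ≤ (p : ℝ) * beta f := by
  classical
  set μ : Measure (X d) := ((p : ℝ≥0∞))⁻¹ • ∑ i ∈ Finset.range p, Measure.dirac (shift^[i] z)
    with hμdef
  have hpne : (p : ℝ≥0∞) ≠ 0 := by exact_mod_cast hp.ne'
  have hμprob : IsProbabilityMeasure μ := by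
    constructor
    rw [hμdef]
    rw [Measure.smul_apply, Measure.finset_sum_apply]
    simp [Finset.sum_const, ENNReal.inv_mul_cancel hpne (by simp)]
  have hμinv : μ.map shift = μ := by
    rw [hμdef, Measure.map_smul]
    congr 1
    ext s hs
    rw [Measure.map_apply shift_measurable hs, Measure.finset_sum_apply, Measure.finset_sum_apply]
    have hpre : ∀ i : ℕ, Measure.dirac (shift^[i] z) (shift ⁻¹' s)
        = Measure.dirac (shift^[i+1] z) s := by
      intro i
      rw [Measure.dirac_apply' _ (shift_measurable hs), Measure.dirac_apply' _ hs]
      simp [Set.indicator, Function.iterate_succ_apply']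
    simp_rw [hpre]
    -- reindex: ∑ i in range p, G (i+1) = ∑ i in range p, G i, where G i = dirac (shift^[i] z) s
    set G : ℕ → ℝ≥0∞ := fun i => Measure.dirac (shift^[i] z) s with hG
    have hG0 : G p = G 0 := by simp [hG, hz]
    have hfin : G 0 ≠ ⊤ := by
      simp only [hG]
      exact (measure_lt_top _ _).ne
    have h1 : (∑ i ∈ Finset.range p, G (i + 1)) + G 0 = (∑ i ∈ Finset.range p, G i) + G 0 := by
      rw [← Finset.sum_range_succ' G p, Finset.sum_range_succ, hG0]
    exact (ENNReal.add_left_inj hfin).mp h1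
  have hint : ∀ i : ℕ, Integrable f (Measure.dirac (shift^[i] z)) := by
    intro i
    refine (integrable_const (f (shift^[i] z))).congr ?_
    rw [Filter.EventuallyEq, MeasureTheory.ae_dirac_eq]
    simp
  have hcalc : ∫ x, f x ∂μ = (p : ℝ)⁻¹ * birkhoff f p z := by
    rw [hμdef, integral_smul_measure, integral_finset_sum_measure (fun i _ => hint i)]
    simp only [integral_dirac]
    rw [birkhoff, ENNReal.toReal_inv]
    simp [smul_eq_mul]
  have hmem : (p : ℝ)⁻¹ * birkhoff f p z ∈ {r : ℝ | ∃ μ : Measure (X d),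
      IsProbabilityMeasure μ ∧ μ.map shift = μ ∧ r = ∫ x, f x ∂μ} :=
    ⟨μ, hμprob, hμinv, hcalc.symm⟩
  have hle : (p : ℝ)⁻¹ * birkhoff f p z ≤ beta f :=
    le_csSup (betaSet_bddAbove hB) hmem
  have hppos : (0 : ℝ) < p := by exact_mod_cast hp
  calc birkhoff f p z = (p : ℝ) * ((p : ℝ)⁻¹ * birkhoff f p z) := by
        field_simp
    _ ≤ (p : ℝ) * beta f := by
        exact mul_le_mul_of_nonneg_left hle hppos.le

end Aux9


namespace Aux9

lemma shift_iter_agree {d : ℕ} {y x : X d} {m : ℕ} (h : ∀ j < m, y j = x j)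
    (i : ℕ) : ∀ j < m - i, (shift^[i] y) j = (shift^[i] x) j := by
  intro j hj
  rw [shift_iter_apply, shift_iter_apply]
  exact h (j + i) (by omega)

/-- Geometric-sum Lipschitz estimate for Birkhoff sums of points agreeing
on the first `ℓ` coordinates. -/
lemma birkhoff_close {d : ℕ} {θ C : ℝ} (hθ0 : 0 < θ) (hθ1 : θ < 1) (hC : 0 ≤ C)
    {f : X d → ℝ} (hf : LipWrt θ C f) {y x : X d} {ℓ : ℕ} (h : ∀ j < ℓ, y j = x j) :
    |birkhoff f ℓ y - birkhoff f ℓ x| ≤ C * (θ * (1 - θ)⁻¹) := by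
  have key : ∀ i < ℓ, |f (shift^[i] y) - f (shift^[i] x)| ≤ C * θ ^ (ℓ - i) := by
    intro i hi
    refine (hf _ _).trans ?_
    refine mul_le_mul_of_nonneg_left ?_ hC
    refine dtheta_le_pow hθ0 hθ1 ?_
    intro j hj
    exact shift_iter_agree h i j (by omega)
  have h1 : |birkhoff f ℓ y - birkhoff f ℓ x| ≤ ∑ i ∈ Finset.range ℓ, C * θ ^ (ℓ - i) := by
    rw [birkhoff, birkhoff, ← Finset.sum_sub_distrib]
    refine (Finset.abs_sum_le_sum_abs _ _).trans ?_
    exact Finset.sum_le_sum fun i hi => key i (Finset.mem_range.mp hi)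
  refine h1.trans ?_
  have h2 : ∑ i ∈ Finset.range ℓ, C * θ ^ (ℓ - i) = C * (θ * ∑ i ∈ Finset.range ℓ, θ ^ i) := by
    rw [← Finset.mul_sum]
    congr 1
    rw [Finset.mul_sum]
    rw [← Finset.sum_range_reflect (fun i => θ ^ (ℓ - i)) ℓ]
    refine Finset.sum_congr rfl fun i hi => ?_
    have hi' := Finset.mem_range.mp hi
    have : ℓ - (ℓ - 1 - i) = i + 1 := by omega
    rw [this, pow_succ]
    ring
  rw [h2]
  refine mul_le_mul_of_nonneg_left ?_ hC
  refine mul_le_mul_of_nonneg_left ?_ hθ0.le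
  have hsum : ∑ i ∈ Finset.range ℓ, θ ^ i ≤ (1 - θ)⁻¹ := by
    refine le_trans (Summable.sum_le_tsum (Finset.range ℓ) (fun i _ => by positivity)
      (summable_geometric_of_lt_one hθ0.le hθ1)) ?_
    rw [tsum_geometric_of_lt_one hθ0.le hθ1]
  exact hsum

lemma dtheta_le_one {d : ℕ} {θ : ℝ} (hθ0 : 0 < θ) (hθ1 : θ < 1) (x y : X d) :
    dtheta θ x y ≤ 1 := by
  simpa using dtheta_le_pow hθ0 hθ1 (x := x) (y := y) (k := 0) (by omega)

lemma exists_bound {d : ℕ} {θ C : ℝ} (hθ0 : 0 < θ) (hθ1 : θ < 1) (hC : 0 ≤ C)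
    {f : X d → ℝ} (hf : LipWrt θ C f) (x₀ : X d) :
    ∀ z, |f z| ≤ |f x₀| + C := by
  intro z
  have h1 : |f z - f x₀| ≤ C * dtheta θ z x₀ := hf z x₀
  have h2 : C * dtheta θ z x₀ ≤ C := by
    calc C * dtheta θ z x₀ ≤ C * 1 :=
          mul_le_mul_of_nonneg_left (dtheta_le_one hθ0 hθ1 _ _) hC
      _ = C := mul_one C
  calc |f z| = |f x₀ + (f z - f x₀)| := by ring_nf
    _ ≤ |f x₀| + |f z - f x₀| := abs_add_le _ _
    _ ≤ |f x₀| + C := by linarith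

/-- Upper bound for Birkhoff sums via periodization. -/
lemma birkhoff_upper {d : ℕ} {θ C : ℝ} (hθ0 : 0 < θ) (hθ1 : θ < 1) (hC : 0 ≤ C)
    {f : X d → ℝ} (hf : LipWrt θ C f) {B : ℝ} (hB : ∀ z, |f z| ≤ B)
    (z : X d) {ℓ : ℕ} (hℓ : 0 < ℓ) :
    birkhoff f ℓ z ≤ (ℓ : ℝ) * beta f + C * (θ * (1 - θ)⁻¹) := by
  obtain ⟨n, rfl⟩ : ∃ n, ℓ = n + 1 := ⟨ℓ - 1, by omega⟩
  set z' : X d := periodize n (fun i => z i.val) with hz'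
  have hz'app : ∀ j, z' j = z (j % (n + 1)) := fun j => rfl
  have hz'per : shift^[n + 1] z' = z' := by
    refine periodic_of_forall fun j => ?_
    rw [hz'app, hz'app, Nat.add_mod_right]
  have hagree : ∀ j < n + 1, z j = z' j := by
    intro j hj
    rw [hz'app, Nat.mod_eq_of_lt hj]
  have h1 : birkhoff f (n + 1) z' ≤ ((n + 1 : ℕ) : ℝ) * beta f :=
    birkhoff_le_beta hB (Nat.succ_pos n) hz'per
  have h2 : |birkhoff f (n + 1) z - birkhoff f (n + 1) z'| ≤ C * (θ * (1 - θ)⁻¹) :=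
    birkhoff_close hθ0 hθ1 hC hf hagree
  have h3 := abs_le.mp h2
  push_cast at h1 ⊢
  linarith [h3.2]

end Aux9


theorem stmt9 (d : ℕ) (hd : 0 < d) (θ C : ℝ) (hθ0 : 0 < θ) (hθ1 : θ < 1)
    (f : X d → ℝ) (hf : LipWrt θ C f) (x : X d) (hx : IsPeriodic x) (hIx : Ifun f x ≠ 0) :
    ∃ (m : ℕ) (w : Fin m → Fin d), x ∈ cylSet m w ∧
      sInf {r : ℝ | ∃ y ∈ cylSet m w, IsPeriodic y ∧ r = Ifun f y} = Ifun f x := by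
  classical
  open Aux9 in
  -- normalize the Lipschitz constant
  set C' : ℝ := max C 0 with hC'def
  have hC' : 0 ≤ C' := le_max_right _ _
  have hf' : LipWrt θ C' f := fun a b =>
    (hf a b).trans (mul_le_mul_of_nonneg_right (le_max_left _ _) (dtheta_nonneg hθ0 _ _))
  set B : ℝ := |f x| + C' with hBdef
  have hB : ∀ z, |f z| ≤ B := exists_bound hθ0 hθ1 hC' hf' x
  set K : ℝ := C' * (θ * (1 - θ)⁻¹) with hKdef
  have hK : 0 ≤ K := by
    have : (0:ℝ) < 1 - θ := by linarith
    positivity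
  set n : ℕ := minPer x with hndef
  obtain ⟨k, hk, hkx⟩ := hx
  have hn : 0 < n := Function.IsPeriodicPt.minimalPeriod_pos hk hkx
  have hxn : shift^[n] x = x := Function.isPeriodicPt_minimalPeriod shift x
  have hxIper : IsPeriodic x := ⟨k, hk, hkx⟩
  have hIval : Ifun f x = (n : ℝ) * beta f - birkhoff f n x := rfl
  have hInonneg : 0 ≤ Ifun f x := by
    rw [hIval]
    have := birkhoff_le_beta hB hn hxn
    linarith
  have hIpos : 0 < Ifun f x := lt_of_le_of_ne hInonneg (Ne.symm hIx)
  obtain ⟨q, hq⟩ := exists_nat_ge ((Ifun f x + 2 * K) / Ifun f x)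
  have hqI : Ifun f x + 2 * K ≤ (q : ℝ) * Ifun f x := by
    rw [div_le_iff₀ hIpos] at hq
    linarith
  refine ⟨(q + 1) * n, fun i => x i, fun i => rfl, ?_⟩
  set m : ℕ := (q + 1) * n with hmdef
  have hm : m = q * n + n := by rw [hmdef, Nat.succ_mul]
  set S : Set ℝ := {r : ℝ | ∃ y, (∀ i : Fin m, y i = x i) ∧ IsPeriodic y ∧ r = Ifun f y}
    with hSdef
  have hmemx : Ifun f x ∈ S := ⟨x, fun i => rfl, hxIper, rfl⟩
  have hlb : ∀ r ∈ S, Ifun f x ≤ r := by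
    rintro r ⟨y, hycyl, hyIper, rfl⟩
    obtain ⟨k', hk', hk'y⟩ := hyIper
    set p : ℕ := minPer y with hpdef
    have hp : 0 < p := Function.IsPeriodicPt.minimalPeriod_pos hk' hk'y
    have hyp : shift^[p] y = y := Function.isPeriodicPt_minimalPeriod shift y
    have hagree : ∀ j < m, y j = x j := fun j hj => hycyl ⟨j, hj⟩
    have hIyval : Ifun f y = (p : ℝ) * beta f - birkhoff f p y := rfl
    by_cases hcase : p ≤ q * n
    · -- small period: y = x
      have xp : ∀ i, x (i + p) = x i := by
        intro i
        have hmod : i % n < n := Nat.mod_lt i hn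
        have h1 : x (i + p) = x ((i + p) % n) := apply_mod hn hxn _
        have h2 : x (i % n + p) = x ((i % n + p) % n) := apply_mod hn hxn _
        have h3 : (i + p) % n = (i % n + p) % n := by
          conv_lhs => rw [Nat.add_mod]
          conv_rhs => rw [Nat.add_mod, Nat.mod_mod_of_dvd _ dvd_rfl]
        have h4 : i % n + p < m := by omega
        have h5 : i % n < m := by omega
        calc x (i + p) = x (i % n + p) := by rw [h1, h3, ← h2]
          _ = y (i % n + p) := (hagree _ h4).symm
          _ = y (i % n) := forall_of_periodic hyp _
          _ = x (i % n) := hagree _ h5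
          _ = x i := (apply_mod hn hxn i).symm
      have hxp : shift^[p] x = x := periodic_of_forall xp
      have hyx : y = x := by
        funext j
        have hjp : j % p < m := by
          have := Nat.mod_lt j hp
          omega
        calc y j = y (j % p) := apply_mod hp hyp j
          _ = x (j % p) := hagree _ hjp
          _ = x j := (apply_mod hp hxp j).symm
      rw [hyx]
    · -- large period
      push_neg at hcase
      set ℓ : ℕ := p - q * n with hℓdef
      have hℓ : 0 < ℓ := by omega
      have hpsum : p = q * n + ℓ := by omega
      have hsplit : birkhoff f p y = birkhoff f (q * n) y + birkhoff f ℓ (shift^[q * n] y) := by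
        conv_lhs => rw [hpsum]
        exact birkhoff_add f _ _ y
      have hag' : ∀ j < q * n, y j = x j := fun j hj => hagree j (by omega)
      have est1 : |birkhoff f (q * n) y - birkhoff f (q * n) x| ≤ K :=
        birkhoff_close hθ0 hθ1 hC' hf' hag'
      have est2 : birkhoff f (q * n) x = (q : ℝ) * birkhoff f n x := birkhoff_mul f hxn q
      have est3 : birkhoff f ℓ (shift^[q * n] y) ≤ (ℓ : ℝ) * beta f + K :=
        birkhoff_upper hθ0 hθ1 hC' hf' hB _ hℓ
      have hcast : (p : ℝ) = (q : ℝ) * (n : ℝ) + (ℓ : ℝ) := by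
        rw [hpsum]; push_cast; ring
      have habs := abs_le.mp est1
      have hstep : (q : ℝ) * Ifun f x - 2 * K ≤ Ifun f y := by
        rw [hIyval, hsplit, hcast, hIval]
        nlinarith [habs.1, habs.2, est3]
      linarith
  exact le_antisymm (csInf_le ⟨Ifun f x, hlb⟩ hmemx) (le_csInf ⟨_, hmemx⟩ hlb)
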